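/- Define N²×N² matrices by (Rre⁺)^{ab}_{rs} = R̂^{ra}_{sb}, (Rre⁻)^{ab}_{rs} = (R̂⁻¹)^{ra}_{sb}, (R̀⁺)^{ab}_{rs} = q^{2s−2a}·R̂^{bs}_{ar}, and (R̀⁻)^{ab}_{rs} = q^{2s−2a}·(R̂⁻¹)^{bs}_{ar}, where R̂⁻¹ = R̂ − (q − q⁻¹)·I_{N²}. Then Rre⁺·R̀⁻ = R̀⁻·Rre⁺ = I_{N²} and Rre⁻·R̀⁺ = R̀⁺·Rre⁻ = I_{N²}. -/

import Mathlib

/-- The `N²×N²` R-matrix of type A, with rows indexed by `(a,b)` and columns by `(r,s)`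
(0-indexed by `Fin N`):  `R̂^{ab}_{rs} = q^{δ_{ab}} δ_{as} δ_{br} + (q − q⁻¹) h(b−a) δ_{ar} δ_{bs}`,
where `h(x) = 1` for `x > 0` and `h(x) = 0` otherwise. -/
noncomputable def Rhat (N : ℕ) (q : ℂ) : Matrix (Fin N × Fin N) (Fin N × Fin N) ℂ :=
  fun p c =>
    (if p.1 = p.2 then q else 1) * (if p.1 = c.2 then 1 else 0) * (if p.2 = c.1 then 1 else 0) +
      (q - q⁻¹) * (if p.1 < p.2 then 1 else 0) *
        (if p.1 = c.1 then 1 else 0) * (if p.2 = c.2 then 1 else 0)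

/-- `(Rre⁺)^{ab}_{rs} = R̂^{ra}_{sb}`. -/
noncomputable def RreP (N : ℕ) (q : ℂ) : Matrix (Fin N × Fin N) (Fin N × Fin N) ℂ :=
  fun p c => Rhat N q (c.1, p.1) (c.2, p.2)

/-- `(Rre⁻)^{ab}_{rs} = (R̂⁻¹)^{ra}_{sb}` where `R̂⁻¹ = R̂ − (q − q⁻¹)·I`. -/
noncomputable def RreM (N : ℕ) (q : ℂ) : Matrix (Fin N × Fin N) (Fin N × Fin N) ℂ :=
  fun p c => (Rhat N q - (q - q⁻¹) • 1) (c.1, p.1) (c.2, p.2)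

/-- `(R̀⁺)^{ab}_{rs} = q^{2s−2a} R̂^{bs}_{ar}`. -/
noncomputable def RgraveP (N : ℕ) (q : ℂ) : Matrix (Fin N × Fin N) (Fin N × Fin N) ℂ :=
  fun p c => q ^ (2 * (c.2 : ℤ) - 2 * (p.1 : ℤ)) * Rhat N q (p.2, c.2) (p.1, c.1)

/-- `(R̀⁻)^{ab}_{rs} = q^{2s−2a} (R̂⁻¹)^{bs}_{ar}` where `R̂⁻¹ = R̂ − (q − q⁻¹)·I`. -/
noncomputable def RgraveM (N : ℕ) (q : ℂ) : Matrix (Fin N × Fin N) (Fin N × Fin N) ℂ :=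
  fun p c => q ^ (2 * (c.2 : ℤ) - 2 * (p.1 : ℤ)) * (Rhat N q - (q - q⁻¹) • 1) (p.2, c.2) (p.1, c.1)

open Finset

lemma teleNeg (q : ℂ) (hq : q ≠ 0) (m : ℕ) :
    (q - q⁻¹) * ∑ k ∈ range m, q ^ (-2 - 2 * (k : ℤ)) = q⁻¹ - q ^ (-1 - 2 * (m : ℤ)) := by
  induction m with
  | zero => simp [zpow_neg_one]
  | succ m ih =>
    rw [Finset.sum_range_succ, mul_add, ih, Nat.cast_succ,
      show (-1 : ℤ) - 2 * ((m : ℤ) + 1) = (-1 - 2 * m) + (-2) from by ring,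
      show (-2 : ℤ) - 2 * (m : ℤ) = (-1 - 2 * m) + (-1) from by ring,
      zpow_add₀ hq, zpow_add₀ hq,
      show (-2 : ℤ) = -(2 : ℤ) from rfl, show (-1 : ℤ) = -(1 : ℤ) from rfl,
      zpow_neg, zpow_neg, zpow_one, zpow_two]
    field_simp
    ring

lemma telePos (q : ℂ) (hq : q ≠ 0) (m : ℕ) :
    (q - q⁻¹) * ∑ k ∈ range m, q ^ (2 + 2 * (k : ℤ)) = q ^ (1 + 2 * (m : ℤ)) - q := by
  induction m with
  | zero => simp [zpow_one]
  | succ m ih =>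
    rw [Finset.sum_range_succ, mul_add, ih, Nat.cast_succ]
    have e1 : q ^ ((1:ℤ) + 2*(m:ℤ) + 2) = q ^ ((1:ℤ)+2*(m:ℤ)) * (q * q) := by
      rw [zpow_add₀ hq]; norm_num [zpow_two, pow_two]
    have e2 : q ^ ((2:ℤ) + 2*(m:ℤ)) = q ^ ((1:ℤ)+2*(m:ℤ)) * q := by
      rw [show (2:ℤ) + 2*(m:ℤ) = (1+2*m)+1 from by ring, zpow_add₀ hq, zpow_one]
    rw [show (1:ℤ) + 2*((m:ℤ)+1) = 1+2*(m:ℤ)+2 from by ring, e1, e2]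
    field_simp
    ring

lemma L1 {N : ℕ} (q : ℂ) (hq : q ≠ 0) (s a : Fin N) (h : s < a) :
    (q - q⁻¹) * ∑ x : Fin N, (if s < x ∧ x < a then q ^ (2 * (s : ℤ) - 2 * (x : ℤ)) else 0)
      = q⁻¹ - q ^ (1 + 2 * (s : ℤ) - 2 * (a : ℤ)) := by
  have step1 : ∑ x : Fin N, (if s < x ∧ x < a then q ^ (2 * (s : ℤ) - 2 * (x : ℤ)) else 0)
      = ∑ n ∈ Finset.Ioo s.val a.val, q ^ (2 * (s : ℤ) - 2 * (n : ℤ)) := by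
    simp only [Fin.lt_def]
    rw [Fin.sum_univ_eq_sum_range
      (fun n => if s.val < n ∧ n < a.val then q ^ (2 * (s : ℤ) - 2 * (n : ℤ)) else 0) N,
      ← Finset.sum_filter]
    congr 1
    ext n
    simp only [Finset.mem_filter, Finset.mem_range, Finset.mem_Ioo]
    have := a.isLt
    omega
  rw [step1, show Finset.Ioo s.val a.val = Finset.Ico (s.val + 1) a.val from rfl,
    Finset.sum_Ico_eq_sum_range]
  have step2 : ∀ k ∈ range (a.val - (s.val + 1)),
      q ^ (2 * (s : ℤ) - 2 * ((s.val + 1 + k : ℕ) : ℤ)) = q ^ (-2 - 2 * (k : ℤ)) := by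
    intro k _
    congr 1
    push_cast
    ring
  rw [Finset.sum_congr rfl step2, teleNeg q hq]
  congr 1
  have : ((a.val - (s.val + 1) : ℕ) : ℤ) = (a : ℤ) - s - 1 := by
    have : s.val < a.val := h
    omega
  rw [this]
  ring

lemma L2 {N : ℕ} (q : ℂ) (hq : q ≠ 0) (a s : Fin N) (h : a < s) :
    (q - q⁻¹) * ∑ x : Fin N, (if a ≤ x ∧ x < s then q ^ (2 * (s : ℤ) - 2 * (x : ℤ)) else 0)
      = q ^ (1 + 2 * (s : ℤ) - 2 * (a : ℤ)) - q := by
  have step1 : ∑ x : Fin N, (if a ≤ x ∧ x < s then q ^ (2 * (s : ℤ) - 2 * (x : ℤ)) else 0)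
      = ∑ n ∈ Finset.Ico a.val s.val, q ^ (2 * (s : ℤ) - 2 * (n : ℤ)) := by
    simp only [Fin.lt_def, Fin.le_def]
    rw [Fin.sum_univ_eq_sum_range
      (fun n => if a.val ≤ n ∧ n < s.val then q ^ (2 * (s : ℤ) - 2 * (n : ℤ)) else 0) N,
      ← Finset.sum_filter]
    congr 1
    ext n
    simp only [Finset.mem_filter, Finset.mem_range, Finset.mem_Ico]
    have := s.isLt
    omega
  rw [step1, Finset.sum_Ico_eq_sum_range]
  have hm : a.val < s.val := h
  rw [← Finset.sum_range_reflect]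
  have step2 : ∀ k ∈ range (s.val - a.val),
      q ^ (2 * (s : ℤ) - 2 * ((a.val + (s.val - a.val - 1 - k) : ℕ) : ℤ)) = q ^ (2 + 2 * (k : ℤ)) := by
    intro k hk
    simp only [Finset.mem_range] at hk
    congr 1
    omega
  rw [Finset.sum_congr rfl step2, telePos q hq]
  congr 2
  omega

lemma rowP {N : ℕ} (q : ℂ) (a b : Fin N) (G : Fin N × Fin N → ℂ) :
    ∑ p : Fin N × Fin N, RreP N q (a, b) p * G p
      = (if b = a then q else 1) * G (b, a)
        + (q - q⁻¹) * (if a = b then 1 else 0) * ∑ x : Fin N, (if x < a then 1 else 0) * G (x, x) := by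
  rw [Fintype.sum_prod_type]
  simp only [RreP, Rhat, add_mul, Finset.sum_add_distrib, ite_mul, mul_ite, one_mul, mul_one,
    zero_mul, mul_zero, Finset.sum_ite_eq, Finset.sum_ite_eq', Finset.mem_univ, if_true,
    Finset.mul_sum]
  rcases eq_or_ne a b with h | h <;>
    simp [h, Finset.sum_ite_eq, Finset.sum_ite_eq']

lemma rowM {N : ℕ} (q : ℂ) (a b : Fin N) (G : Fin N × Fin N → ℂ) :
    ∑ p : Fin N × Fin N, RreM N q (a, b) p * G p
      = (if b = a then q else 1) * G (b, a)
        - (q - q⁻¹) * (if a = b then 1 else 0) * ∑ x : Fin N, (if a ≤ x then 1 else 0) * G (x, x) := by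
  rw [Fintype.sum_prod_type]
  simp only [RreM, Rhat, Matrix.sub_apply, Matrix.smul_apply, Matrix.one_apply, smul_eq_mul,
    Prod.mk.injEq, mul_ite, mul_one, mul_zero, ite_and, sub_mul, add_mul, ite_mul, one_mul,
    zero_mul, Finset.sum_sub_distrib, Finset.sum_add_distrib, Finset.sum_ite_eq,
    Finset.sum_ite_eq', Finset.mem_univ, if_true]
  rcases eq_or_ne a b with h | h <;>
    simp [h, Finset.sum_ite_eq, Finset.sum_ite_eq']
  have key : ∀ x : Fin N, (if x < b then q * G (x,x) - q⁻¹ * G (x,x) else 0)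
      = (q * G (x,x) - q⁻¹ * G (x,x))
        - ((q * (if b ≤ x then G (x,x) else 0)) - q⁻¹ * (if b ≤ x then G (x,x) else 0)) := by
    intro x
    rcases lt_or_ge x b with hx | hx
    · simp [hx, not_le.mpr hx]
    · simp [not_lt.mpr hx, hx]
  rw [Finset.sum_congr rfl (fun x _ => key x), Finset.sum_sub_distrib, Finset.sum_sub_distrib,
    Finset.mul_sum, Finset.mul_sum, Finset.sum_sub_distrib]
  ring

/-- `Rre⁺ · R̀⁻ = R̀⁻ · Rre⁺ = I` and `Rre⁻ · R̀⁺ = R̀⁺ · Rre⁻ = I`. -/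
theorem Rre_Rgrave_inverse (N : ℕ) (hN : 1 ≤ N) (q : ℂ) (hq : q ≠ 0) :
    RreP N q * RgraveM N q = 1 ∧ RgraveM N q * RreP N q = 1 ∧
    RreM N q * RgraveP N q = 1 ∧ RgraveP N q * RreM N q = 1 := by
  have key1 : RreP N q * RgraveM N q = 1 := by
    ext ⟨a, b⟩ ⟨r, s⟩
    rw [Matrix.mul_apply]
    rw [rowP q a b (fun p => RgraveM N q p (r, s))]
    simp only [RgraveM, Rhat, Matrix.sub_apply, Matrix.smul_apply, Matrix.one_apply,
      smul_eq_mul, Prod.mk.injEq]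
    rcases eq_or_ne a b with hab | hab
    · subst hab
      simp only [eq_self_iff_true, if_true, true_and, and_self, mul_one, one_mul]
      rcases eq_or_ne r s with hrs | hrs
      · subst hrs
        simp only [eq_self_iff_true, if_true, true_and, and_self, mul_one, one_mul]
        -- now r = s everywhere
        rcases lt_trichotomy a r with h | h | h
        · -- a < r : everything vanishes
          have hsum : ∑ x : Fin N, (if x < a then (1:ℂ) else 0) *
              (q ^ (2 * (r : ℤ) - 2 * (x : ℤ)) *
                (((((if x = r then q else 1) * if x = r then 1 else 0) * if r = x then 1 else 0) +
                    (q - q⁻¹) * if x < r then 1 else 0) -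
                  (q - q⁻¹))) = 0 := by
            refine Finset.sum_eq_zero fun x _ => ?_
            rcases lt_or_ge x a with hx | hx
            · have hxr : x < r := hx.trans h
              simp [hx, hxr, ne_of_lt hxr, Ne.symm (ne_of_lt hxr)]
            · simp [not_lt.mpr hx]
          rw [hsum]
          simp [h, ne_of_lt h, Ne.symm (ne_of_lt h)]
        · -- a = r
          subst h
          have hsum : ∑ x : Fin N, (if x < a then (1:ℂ) else 0) *
              (q ^ (2 * (a : ℤ) - 2 * (x : ℤ)) *
                (((((if x = a then q else 1) * if x = a then 1 else 0) * if a = x then 1 else 0) +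
                    (q - q⁻¹) * if x < a then 1 else 0) -
                  (q - q⁻¹))) = 0 := by
            refine Finset.sum_eq_zero fun x _ => ?_
            rcases lt_or_ge x a with hx | hx
            · simp [hx, ne_of_lt hx, Ne.symm (ne_of_lt hx)]
            · simp [not_lt.mpr hx]
          rw [hsum]
          simp only [eq_self_iff_true, if_true, lt_irrefl, if_false, sub_self, zpow_zero,
            mul_zero, add_zero, mul_one, one_mul]
          field_simp
          ring
        · -- r < a : telescoping
          have hpt : ∀ x : Fin N, (if x < a then (1:ℂ) else 0) *
              (q ^ (2 * (r : ℤ) - 2 * (x : ℤ)) *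
                (((((if x = r then q else 1) * if x = r then 1 else 0) * if r = x then 1 else 0) +
                    (q - q⁻¹) * if x < r then 1 else 0) -
                  (q - q⁻¹)))
              = (if x = r then q⁻¹ else 0)
                - (q - q⁻¹) * (if r < x ∧ x < a then q ^ (2 * (r : ℤ) - 2 * (x : ℤ)) else 0) := by
            intro x
            rcases lt_or_ge x a with hx | hx
            · rcases lt_trichotomy x r with h1 | h1 | h1
              · simp [hx, h1, ne_of_lt h1, Ne.symm (ne_of_lt h1), not_lt.mpr h1.le]
              · subst h1
                simp [hx, lt_irrefl]
              · simp [hx, h1, ne_of_gt h1, Ne.symm (ne_of_gt h1), not_lt.mpr h1.le]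
                ring
            · have hxr : x ≠ r := fun hh => absurd (hh ▸ h) (not_lt.mpr hx)
              simp [not_lt.mpr hx, hxr]
          rw [Finset.sum_congr rfl fun x _ => hpt x, Finset.sum_sub_distrib, ← Finset.mul_sum]
          rw [Finset.sum_ite_eq' Finset.univ r fun _ => q⁻¹]
          rw [L1 q hq r a h]
          have hz : q ^ (1 + 2 * (r : ℤ) - 2 * (a : ℤ)) = q * q ^ (2 * (r : ℤ) - 2 * (a : ℤ)) := by
            rw [show (1 : ℤ) + 2 * (r : ℤ) - 2 * (a : ℤ) = 1 + (2 * (r : ℤ) - 2 * (a : ℤ)) from by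
              ring, zpow_add₀ hq, zpow_one]
          simp only [Finset.mem_univ, if_true, ne_of_gt h, Ne.symm (ne_of_gt h), if_false,
            not_lt.mpr h.le, zero_mul, mul_zero, zero_add, add_zero, mul_one]
          rw [hz]
          ring
      · -- r ≠ s
        have hz : ∀ x : Fin N, (((if x = s then q else 1) * if x = r then 1 else 0) *
            if s = x then (1:ℂ) else 0) = 0 := by
          intro x
          rcases eq_or_ne s x with h1 | h1
          · rcases eq_or_ne x r with h2 | h2
            · exact absurd (h1.trans h2).symm hrs
            · simp [h2]
          · simp [h1]
        have hR : ¬(a = r ∧ a = s) := fun ⟨h1, h2⟩ => hrs (h1.symm.trans h2)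
        simp [hz, Ne.symm hrs, hR]
        intro h1 h2
        exact absurd (h1.trans h2) (Ne.symm hrs)
    · -- a ≠ b
      simp only [hab, if_false, mul_zero, zero_mul, add_zero, mul_one, Ne.symm hab]
      rcases eq_or_ne s b with hsb | hsb
      · subst hsb
        have has : a ≠ s := hab
        simp [has, fun hh => has hh, sub_self, zpow_zero]
      · simp [hsb, Ne.symm hsb, Ne.symm hab]
  have key2 : RreM N q * RgraveP N q = 1 := by
    ext ⟨a, b⟩ ⟨r, s⟩
    rw [Matrix.mul_apply]
    rw [rowM q a b (fun p => RgraveP N q p (r, s))]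
    simp only [RgraveP, Rhat, Matrix.one_apply, Prod.mk.injEq]
    rcases eq_or_ne a b with hab | hab
    · subst hab
      simp only [eq_self_iff_true, if_true, true_and, and_self, mul_one, one_mul]
      rcases eq_or_ne r s with hrs | hrs
      · subst hrs
        simp only [eq_self_iff_true, if_true, true_and, and_self, mul_one, one_mul]
        rcases lt_trichotomy r a with h | h | h
        · -- r < a : everything vanishes
          have hsum : ∑ x : Fin N, (if a ≤ x then (1:ℂ) else 0) *
              (q ^ (2 * (r : ℤ) - 2 * (x : ℤ)) *
                ((((if x = r then q else 1) * if x = r then 1 else 0) * if r = x then 1 else 0) +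
                  (q - q⁻¹) * if x < r then 1 else 0)) = 0 := by
            refine Finset.sum_eq_zero fun x _ => ?_
            rcases le_or_gt a x with hx | hx
            · have hrx : r < x := lt_of_lt_of_le h hx
              simp [hx, ne_of_gt hrx, Ne.symm (ne_of_gt hrx), not_lt.mpr hrx.le]
            · simp [not_le.mpr hx]
          rw [hsum]
          simp [ne_of_gt h, Ne.symm (ne_of_gt h), not_lt.mpr h.le]
        · -- a = r
          subst h
          have hpt : ∀ x : Fin N, (if r ≤ x then (1:ℂ) else 0) *
              (q ^ (2 * (r : ℤ) - 2 * (x : ℤ)) *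
                ((((if x = r then q else 1) * if x = r then 1 else 0) * if r = x then 1 else 0) +
                  (q - q⁻¹) * if x < r then 1 else 0))
              = (if x = r then q else 0) := by
            intro x
            rcases eq_or_ne x r with rfl | hxr
            · simp [le_refl, lt_irrefl]
            · rcases le_or_gt r x with hx | hx
              · simp [hx, hxr, Ne.symm hxr, not_lt.mpr hx]
              · simp [not_le.mpr hx, hxr]
          rw [Finset.sum_congr rfl fun x _ => hpt x,
            Finset.sum_ite_eq' Finset.univ r fun _ => q]
          simp only [Finset.mem_univ, if_true, eq_self_iff_true, lt_irrefl, if_false, sub_self,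
            zpow_zero, mul_zero, add_zero, mul_one, one_mul]
          field_simp
          ring
        · -- a < r : telescoping
          have hpt : ∀ x : Fin N, (if a ≤ x then (1:ℂ) else 0) *
              (q ^ (2 * (r : ℤ) - 2 * (x : ℤ)) *
                ((((if x = r then q else 1) * if x = r then 1 else 0) * if r = x then 1 else 0) +
                  (q - q⁻¹) * if x < r then 1 else 0))
              = (if x = r then q else 0)
                + (q - q⁻¹) * (if a ≤ x ∧ x < r then q ^ (2 * (r : ℤ) - 2 * (x : ℤ)) else 0) := by
            intro x
            rcases le_or_gt a x with hx | hx
            · rcases lt_trichotomy x r with h1 | h1 | h1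
              · simp [hx, h1, ne_of_lt h1, Ne.symm (ne_of_lt h1)]
                ring
              · subst h1
                simp [hx, lt_irrefl, le_refl]
              · simp [hx, ne_of_gt h1, Ne.symm (ne_of_gt h1), not_lt.mpr h1.le]
            · have hxr : x ≠ r := fun hh => absurd hx (not_lt.mpr (hh ▸ h.le))
              simp [not_le.mpr hx, hxr]
          rw [Finset.sum_congr rfl fun x _ => hpt x, Finset.sum_add_distrib,
            Finset.sum_ite_eq' Finset.univ r fun _ => q, ← Finset.mul_sum]
          rw [L2 q hq a r h]
          have hz : q ^ (1 + 2 * (r : ℤ) - 2 * (a : ℤ)) = q * q ^ (2 * (r : ℤ) - 2 * (a : ℤ)) := by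
            rw [show (1 : ℤ) + 2 * (r : ℤ) - 2 * (a : ℤ) = 1 + (2 * (r : ℤ) - 2 * (a : ℤ)) from by
              ring, zpow_add₀ hq, zpow_one]
          simp only [Finset.mem_univ, if_true, ne_of_lt h, Ne.symm (ne_of_lt h), if_false, h,
            zero_mul, mul_zero, zero_add, add_zero, mul_one, one_mul]
          rw [hz]
          ring
      · -- r ≠ s
        have hz : ∀ x : Fin N, (((if x = s then q else 1) * if x = r then 1 else 0) *
            if s = x then (1:ℂ) else 0) = 0 := by
          intro x
          rcases eq_or_ne s x with h1 | h1
          · rcases eq_or_ne x r with h2 | h2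
            · exact absurd (h1.trans h2).symm hrs
            · simp [h2]
          · simp [h1]
        have hR : ¬(a = r ∧ a = s) := fun ⟨h1, h2⟩ => hrs (h1.symm.trans h2)
        simp [hz, Ne.symm hrs, hR]
        intro h1 h2
        exact absurd (h1.trans h2) (Ne.symm hrs)
    · simp only [hab, if_false, mul_zero, zero_mul, sub_zero, mul_one, Ne.symm hab]
      rcases eq_or_ne s b with hsb | hsb
      · subst hsb
        rcases eq_or_ne a r with rfl | har
        · simp [hab, sub_self, zpow_zero]
        · simp [har, hab]
      · simp [hsb, Ne.symm hsb]
  exact ⟨key1, mul_eq_one_comm.mp key1, key2, mul_eq_one_comm.mp key2⟩
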